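/- Let 𝒬 be the rational comb with its path metric, basepoint b = (0,0), and inclusion ι : 𝒬 → ℝ². Then the map Ψ : 𝒬 → Π_{x∈𝒬} (ℝ × ℝ²) defined by Ψ(z) := (ψ_z(x), dir_z(x))_{x∈𝒬}, where the target carries the product topology, is a homeomorphism onto its image. -/

import Mathlib

open Filter Topology

/-- The rational comb `𝒬 = (ℝ × {0}) ∪ (ℚ × ℝ) ⊆ ℝ²`: a point is on the
horizontal spine (second coordinate zero) or on a vertical tooth over a
rational number. -/
@[ext]
structure Comb where
  pt : ℝ × ℝ
  mem : pt.2 = 0 ∨ ∃ q : ℚ, (q : ℝ) = pt.1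

/-- The inclusion `ι : 𝒬 → ℝ²`. -/
def Comb.ι (x : Comb) : ℝ × ℝ := x.pt

/-- The path metric of the comb:
`d((a,s),(c,t)) = |s − t|` if `a = c`, and `|s| + |a − c| + |t|` otherwise. -/
noncomputable def combDist (x y : Comb) : ℝ :=
  if x.pt.1 = y.pt.1 then |x.pt.2 - y.pt.2|
  else |x.pt.2| + |x.pt.1 - y.pt.1| + |y.pt.2|

noncomputable instance : MetricSpace Comb where
  dist := combDist
  dist_self x := by
    show combDist x x = 0
    simp [combDist]
  dist_comm x y := by
    show combDist x y = combDist y x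
    unfold combDist
    rcases eq_or_ne x.pt.1 y.pt.1 with h | h
    · rw [if_pos h, if_pos h.symm, abs_sub_comm]
    · rw [if_neg h, if_neg (Ne.symm h), abs_sub_comm]
      ring
  dist_triangle x y z := by
    show combDist x z ≤ combDist x y + combDist y z
    unfold combDist
    obtain ⟨⟨a, s⟩, _⟩ := x
    obtain ⟨⟨c, t⟩, _⟩ := y
    obtain ⟨⟨e, u⟩, _⟩ := z
    simp only
    have hsu : |s - u| ≤ |s| + |u| := by
      simpa [sub_eq_add_neg] using abs_add_le s (-u)
    have hst : |s - t| ≤ |s| + |t| := by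
      simpa [sub_eq_add_neg] using abs_add_le s (-t)
    have htu : |t - u| ≤ |t| + |u| := by
      simpa [sub_eq_add_neg] using abs_add_le t (-u)
    have hs' : |s| - |t| ≤ |s - t| := abs_sub_abs_le_abs_sub s t
    have hu' : |u| - |t| ≤ |t - u| := by
      rw [abs_sub_comm]; exact abs_sub_abs_le_abs_sub u t
    by_cases h2 : a = c
    · subst h2
      by_cases h1 : a = e
      · subst h1
        simp only [if_pos rfl]
        exact abs_sub_le s t u
      · rw [if_neg h1, if_pos rfl, if_neg h1]
        linarith
    · by_cases h3 : c = e
      · subst h3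
        rw [if_neg h2, if_neg h2, if_pos rfl]
        linarith
      · by_cases h1 : a = e
        · subst h1
          rw [if_pos rfl, if_neg h2, if_neg h3]
          have := abs_nonneg (a - c)
          have := abs_nonneg (c - a)
          have := abs_nonneg t
          linarith [abs_sub_le s t u, htu]
        · rw [if_neg h1, if_neg h2, if_neg h3]
          have := abs_sub_le a c e
          have := abs_nonneg t
          linarith
  eq_of_dist_eq_zero := by
    intro x y h
    have h : combDist x y = 0 := h
    unfold combDist at h
    rcases eq_or_ne x.pt.1 y.pt.1 with h1 | h1
    · rw [if_pos h1] at h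
      have h2 : x.pt.2 = y.pt.2 := by
        have := abs_eq_zero.mp h
        linarith
      ext
      · exact h1
      · exact h2
    · rw [if_neg h1] at h
      exfalso
      have hpos : 0 < |x.pt.1 - y.pt.1| := abs_pos.mpr (sub_ne_zero.mpr h1)
      have := abs_nonneg x.pt.2
      have := abs_nonneg y.pt.2
      linarith

/-- The basepoint `b = (0,0)` of the comb. -/
def combBase : Comb := ⟨(0, 0), Or.inl rfl⟩

/-- The horofunction at `z` with basepoint `b`: `ψ_z(x) = d(x,z) - d(b,z)`. -/
noncomputable def horo {X : Type*} [MetricSpace X] (b z : X) : X → ℝ :=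
  fun x => dist x z - dist b z

/-- The inclusion `ι : 𝒬 → ℝ²`, valued in the Euclidean plane
(with the Euclidean norm). -/
noncomputable def combιE (x : Comb) : EuclideanSpace ℝ (Fin 2) :=
  WithLp.toLp 2 ![x.pt.1, x.pt.2]

/-- `f(u) = (e^u − 1)/(e^u + 1)`. -/
noncomputable def fdir (u : ℝ) : ℝ := (Real.exp u - 1) / (Real.exp u + 1)

open Classical in
/-- The direction datum `dir_y(x) ∈ ℝ²` from `x` towards `y`:
`dir_y(x) = f(d(x,y)) · (ι(y) − ι(x))/‖ι(y) − ι(x)‖` for `y ≠ x` (Euclidean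
norm), and `dir_x(x) = 0`. -/
noncomputable def dirTo (y x : Comb) : EuclideanSpace ℝ (Fin 2) :=
  if y = x then 0
  else fdir (dist x y) • ‖combιE y - combιE x‖⁻¹ • (combιE y - combιE x)

lemma fdir_eq (u : ℝ) : fdir u = 1 - 2 / (Real.exp u + 1) := by
  have h : Real.exp u + 1 ≠ 0 := by positivity
  rw [fdir, eq_sub_iff_add_eq, ← add_div, div_eq_one_iff_eq h]
  ring

lemma fdir_strictMono : StrictMono fdir := by
  intro a b hab
  rw [fdir_eq, fdir_eq]
  have ha : (0:ℝ) < Real.exp a + 1 := by positivity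
  have hb : (0:ℝ) < Real.exp b + 1 := by positivity
  have : Real.exp a + 1 < Real.exp b + 1 := by
    have := Real.exp_lt_exp.mpr hab; linarith
  have := div_lt_div_of_pos_left (by norm_num : (0:ℝ) < 2) ha this
  linarith

lemma fdir_zero : fdir 0 = 0 := by simp [fdir]

lemma continuous_fdir : Continuous fdir := by
  unfold fdir
  apply Continuous.div
  · exact Real.continuous_exp.sub continuous_const
  · exact Real.continuous_exp.add continuous_const
  · intro u; positivity

lemma combιE_injective : Function.Injective combιE := by
  intro x y h
  have h0 := congrArg (fun v : EuclideanSpace ℝ (Fin 2) => v 0) h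
  have h1 := congrArg (fun v : EuclideanSpace ℝ (Fin 2) => v 1) h
  simp only [combιE, PiLp.toLp_apply, Matrix.cons_val_zero, Matrix.cons_val_one, Matrix.head_cons] at h0 h1
  ext <;> assumption

lemma norm_dirTo (y x : Comb) : ‖dirTo y x‖ = fdir (dist x y) := by
  unfold dirTo
  split_ifs with h
  · subst h; simp [fdir_zero]
  · have hv : combιE y - combιE x ≠ 0 := by
      intro hc
      exact h (combιE_injective (sub_eq_zero.mp hc))
    have hn : ‖combιE y - combιE x‖ ≠ 0 := norm_ne_zero_iff.mpr hv
    have hf : 0 ≤ fdir (dist x y) := by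
      have := fdir_strictMono.monotone (dist_nonneg : (0:ℝ) ≤ dist x y)
      rwa [fdir_zero] at this
    rw [norm_smul, norm_smul, norm_inv, norm_norm, Real.norm_eq_abs,
      abs_of_nonneg hf, inv_mul_cancel₀ hn, mul_one]

lemma dist_comb_def (x y : Comb) : dist x y = combDist x y := rfl

lemma continuous_fst_pt : Continuous (fun z : Comb => z.pt.1) := by
  apply LipschitzWith.continuous (K := 1)
  apply LipschitzWith.of_dist_le_mul
  intro x y
  simp only [NNReal.coe_one, one_mul, Real.dist_eq, dist_comb_def, combDist]
  split_ifs with h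
  · simp [h, abs_nonneg]
  · have := abs_nonneg x.pt.2
    have := abs_nonneg y.pt.2
    linarith

lemma continuous_snd_pt : Continuous (fun z : Comb => z.pt.2) := by
  apply LipschitzWith.continuous (K := 1)
  apply LipschitzWith.of_dist_le_mul
  intro x y
  simp only [NNReal.coe_one, one_mul, Real.dist_eq, dist_comb_def, combDist]
  split_ifs with h
  · exact le_refl _
  · have h1 : |x.pt.2 - y.pt.2| ≤ |x.pt.2| + |y.pt.2| := by
      simpa [sub_eq_add_neg] using abs_add_le x.pt.2 (-y.pt.2)
    have := abs_nonneg (x.pt.1 - y.pt.1)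
    linarith

lemma continuous_combιE : Continuous combιE := by
  unfold combιE
  apply (PiLp.continuous_toLp (p := 2) (β := fun _ : Fin 2 => ℝ)).comp
  apply continuous_pi
  intro i
  fin_cases i
  · simpa [combιE] using continuous_fst_pt
  · simpa [combιE] using continuous_snd_pt

lemma continuous_dirTo (x : Comb) : Continuous (fun z : Comb => dirTo z x) := by
  rw [continuous_iff_continuousAt]
  intro z
  by_cases hz : z = x
  · subst hz
    have h0 : dirTo z z = 0 := by simp [dirTo]
    rw [ContinuousAt, h0, tendsto_zero_iff_norm_tendsto_zero]
    simp only [norm_dirTo]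
    have hc : Continuous (fun w : Comb => dist z w) := continuous_const.dist continuous_id
    have : Filter.Tendsto (fun w : Comb => dist z w) (𝓝 z) (𝓝 0) := by
      have := hc.tendsto z
      rwa [dist_self] at this
    have := (continuous_fdir.tendsto 0).comp this
    rwa [fdir_zero] at this
  · have hopen : IsOpen {w : Comb | w ≠ x} := isOpen_ne
    have heq : ∀ w ∈ {w : Comb | w ≠ x}, dirTo w x =
        fdir (dist x w) • ‖combιE w - combιE x‖⁻¹ • (combιE w - combιE x) := by
      intro w hw
      unfold dirTo
      rw [if_neg hw]
    have hcongr : (fun w : Comb => dirTo w x) =ᶠ[𝓝 z]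
        (fun w => fdir (dist x w) • ‖combιE w - combιE x‖⁻¹ • (combιE w - combιE x)) := by
      filter_upwards [hopen.mem_nhds hz] with w hw using heq w hw
    rw [continuousAt_congr hcongr]
    have hvz : combιE z - combιE x ≠ 0 := by
      intro hc; exact hz (combιE_injective (sub_eq_zero.mp hc))
    have hv : Continuous (fun w : Comb => combιE w - combιE x) :=
      continuous_combιE.sub continuous_const
    have h1 : ContinuousAt (fun w : Comb => fdir (dist x w)) z :=
      (continuous_fdir.comp (continuous_const.dist continuous_id)).continuousAt
    have h2 : ContinuousAt (fun w : Comb => ‖combιE w - combιE x‖⁻¹) z := by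
      apply ContinuousAt.inv₀ hv.norm.continuousAt
      exact norm_ne_zero_iff.mpr hvz
    exact h1.smul (h2.smul hv.continuousAt)

/-- The map `Ψ : 𝒬 → Π_{x ∈ 𝒬} (ℝ × ℝ²)`, `Ψ(z) = (ψ_z(x), dir_z(x))_{x∈𝒬}`,
into the product space with the product topology, is a homeomorphism onto its
image (i.e. a topological embedding). -/
theorem stmt8 :
    Topology.IsEmbedding
      (fun z : Comb => fun x : Comb =>
        ((horo combBase z x, dirTo z x) : ℝ × EuclideanSpace ℝ (Fin 2))) := by
  set Ψ : Comb → (Comb → ℝ × EuclideanSpace ℝ (Fin 2)) :=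
    fun z x => (horo combBase z x, dirTo z x) with hΨ
  have hcont : Continuous Ψ := by
    apply continuous_pi
    intro x
    apply Continuous.prodMk
    · show Continuous fun z : Comb => dist x z - dist combBase z
      exact (continuous_const.dist continuous_id).sub (continuous_const.dist continuous_id)
    · exact continuous_dirTo x
  have hinj : Function.Injective Ψ := by
    intro z w h
    have := congrFun h z
    have h2 : dirTo w z = dirTo z z := (congrArg Prod.snd this).symm
    have h3 : ‖dirTo w z‖ = 0 := by rw [h2]; simp [dirTo]
    rw [norm_dirTo] at h3
    have : dist z w = 0 := by
      by_contra hne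
      have hpos : 0 < dist z w := lt_of_le_of_ne dist_nonneg (Ne.symm hne)
      have := fdir_strictMono hpos
      rw [fdir_zero] at this
      linarith [h3 ▸ this]
    exact (dist_eq_zero.mp this).symm ▸ rfl
  have hind : Topology.IsInducing Ψ := by
    rw [Topology.isInducing_iff_nhds]
    intro z
    apply le_antisymm
    · exact (hcont.tendsto z).le_comap
    · intro s hs
      obtain ⟨ε, hε, hball⟩ := Metric.mem_nhds_iff.mp hs
      have hfε : 0 < fdir ε := by
        have := fdir_strictMono hε; rwa [fdir_zero] at this
      refine Filter.mem_comap.mpr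
        ⟨{g : Comb → ℝ × EuclideanSpace ℝ (Fin 2) | ‖(g z).2‖ < fdir ε}, ?_, ?_⟩
      · have hopen : IsOpen {g : Comb → ℝ × EuclideanSpace ℝ (Fin 2) | ‖(g z).2‖ < fdir ε} :=
          isOpen_lt ((continuous_apply z).snd.norm) continuous_const
        apply hopen.mem_nhds
        show ‖(Ψ z z).2‖ < fdir ε
        have h0 : (Ψ z z).2 = dirTo z z := rfl
        rw [h0]
        simpa [dirTo] using hfε
      · intro w hw
        apply hball
        have h1 : ‖dirTo w z‖ < fdir ε := hw
        rw [norm_dirTo] at h1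
        have hd : dist z w < ε := fdir_strictMono.lt_iff_lt.mp h1
        rw [Metric.mem_ball, dist_comm]
        exact hd
  exact ⟨hind, hinj⟩
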